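/- Partial swap: Let s be a USO outmap on the n-hypercube and fix a dimension i. Define s̃(u) = s(u) if u_i = s(u)_i, and s̃(u) = s(u XOR e_i) if u_i ≠ s(u)_i. Then s̃ is a USO outmap. -/
import Mathlib


/-- `s` is the outmap of a unique sink orientation (Szabó–Welzl criterion). -/
def IsUSO {ι : Type*} (s : (ι → Bool) → (ι → Bool)) : Prop :=
  ∀ u v : ι → Bool, u ≠ v → ∃ i, u i ≠ v i ∧ s u i ≠ s v i

/-- Flip coordinate `i` of a vertex of the hypercube. -/
def flipV {n : ℕ} (u : Fin n → Bool) (i : Fin n) : Fin n → Bool :=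
  fun j => if j = i then !u j else u j

lemma flipV_flipV {n : ℕ} (u : Fin n → Bool) (i : Fin n) : flipV (flipV u i) i = u := by
  funext j
  by_cases h : j = i <;> simp [flipV, h]

lemma flipV_ne {n : ℕ} (u : Fin n → Bool) (i : Fin n) : flipV u i ≠ u := by
  intro h
  have := congrFun h i
  simp [flipV] at this

lemma flipV_apply_ne {n : ℕ} (u : Fin n → Bool) (i j : Fin n) (h : j ≠ i) :
    flipV u i j = u j := by simp [flipV, h]

lemma key {n : ℕ} (s : (Fin n → Bool) → (Fin n → Bool)) (hs : IsUSO s) (i : Fin n)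
    (v : Fin n → Bool) : s (flipV v i) i ≠ s v i := by
  obtain ⟨j, hj1, hj2⟩ := hs (flipV v i) v (flipV_ne v i)
  have hji : j = i := by
    by_contra h
    exact hj1 (flipV_apply_ne v i j h)
  subst hji; exact hj2

theorem stmt6 (n : ℕ) (s : (Fin n → Bool) → (Fin n → Bool)) (hs : IsUSO s)
    (i : Fin n) :
    IsUSO (fun u : Fin n → Bool => if u i = s u i then s u else s (flipV u i)) := by
  intro u v huv
  simp only
  by_cases hu : u i = s u i <;> by_cases hv : v i = s v i <;>
    simp only [hu, hv, if_true, if_false, if_pos, if_neg, not_false_iff]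
  · exact hs u v huv
  · -- u unswapped, v swapped
    by_cases hfv : flipV v i = u
    · exfalso
      have h1 : s (flipV v i) i ≠ s v i := key s hs i v
      rw [hfv] at h1
      have h2 := congrFun hfv i
      simp [flipV] at h2
      rw [← hu] at h1
      revert h1 h2 hv
      cases u i <;> cases v i <;> cases s v i <;> simp
    · obtain ⟨j, hj1, hj2⟩ := hs u (flipV v i) (fun h => hfv h.symm)
      have hji : j ≠ i := by
        intro hji
        rw [hji] at hj1 hj2
        have h2 : flipV v i i = !(v i) := by simp [flipV]
        rw [h2] at hj1
        have h3 := key s hs i v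
        rw [hu] at hj1
        revert hj1 hj2 h3 hv
        cases v i <;> cases s u i <;> cases s v i <;> cases s (flipV v i) i <;> simp
      refine ⟨j, ?_, hj2⟩
      rwa [flipV_apply_ne v i j hji] at hj1
  · -- u swapped, v unswapped (symmetric)
    by_cases hfu : flipV u i = v
    · exfalso
      have h1 : s (flipV u i) i ≠ s u i := key s hs i u
      rw [hfu] at h1
      have h2 := congrFun hfu i
      simp [flipV] at h2
      rw [← hv] at h1
      revert h1 h2 hu
      cases u i <;> cases v i <;> cases s u i <;> simp
    · obtain ⟨j, hj1, hj2⟩ := hs (flipV u i) v hfu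
      have hji : j ≠ i := by
        intro hji
        rw [hji] at hj1 hj2
        have h2 : flipV u i i = !(u i) := by simp [flipV]
        rw [h2] at hj1
        have h3 := key s hs i u
        rw [hv] at hj1
        revert hj1 hj2 h3 hu
        cases u i <;> cases s v i <;> cases s u i <;> cases s (flipV u i) i <;> simp
      refine ⟨j, ?_, hj2⟩
      rwa [flipV_apply_ne u i j hji] at hj1
  · -- both swapped
    have hne : flipV u i ≠ flipV v i := by
      intro h
      apply huv
      have := congrArg (fun w => flipV w i) h
      simpa [flipV_flipV] using this
    obtain ⟨j, hj1, hj2⟩ := hs (flipV u i) (flipV v i) hne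
    refine ⟨j, ?_, hj2⟩
    by_cases hji : j = i
    · subst hji
      intro h; apply hj1
      simp [flipV, h]
    · rwa [flipV_apply_ne u i j hji, flipV_apply_ne v i j hji] at hj1
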